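/- Let u(z) = ‖z‖ − 1 on the unit ball of ℂⁿ (extended by 0 outside, inside the double ball), viewing ℂⁿ ≅ ℝ^{2n}. The contact set {Γ_u = ũ} (convex envelope taken over the double ball B_2) consists of the single point {0}. More generally, if u is a function on the unit ball with u ≥ ‖z‖ − 1 and u(0) = −1, then the contact set of u is contained in {0}. -/

import Mathlib

open Set Metric

namespace Stmt12

noncomputable section
open Classical

variable {m : ℕ}

/-- The extension `ũ` of `min{u,0}` by `0` from the unit ball to the rest of the space. -/
def tildeExt (u : EuclideanSpace ℝ (Fin m) → ℝ) : EuclideanSpace ℝ (Fin m) → ℝ :=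
  fun x => if x ∈ ball (0 : EuclideanSpace ℝ (Fin m)) 1 then min (u x) 0 else 0

/-- The convex envelope over the double ball `B₂`: the supremum of all affine
functions lying below `w` on `B₂`. -/
def convexEnvelope (w : EuclideanSpace ℝ (Fin m) → ℝ) (x : EuclideanSpace ℝ (Fin m)) : ℝ :=
  sSup {t : ℝ | ∃ p : EuclideanSpace ℝ (Fin m), ∃ c : ℝ,
    (∀ ξ ∈ ball (0 : EuclideanSpace ℝ (Fin m)) 2, c + (inner ℝ p ξ : ℝ) ≤ w ξ) ∧
    t = c + (inner ℝ p x : ℝ)}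

/-- The contact set `{Γ_u = ũ}` inside `B₂`. -/
def contactSet (u : EuclideanSpace ℝ (Fin m) → ℝ) : Set (EuclideanSpace ℝ (Fin m)) :=
  {x ∈ ball (0 : EuclideanSpace ℝ (Fin m)) 2 |
    convexEnvelope (tildeExt u) x = tildeExt u x}

lemma tildeExt_nonpos (u : EuclideanSpace ℝ (Fin m) → ℝ) (x : EuclideanSpace ℝ (Fin m)) :
    tildeExt u x ≤ 0 := by
  unfold tildeExt
  split_ifs
  · exact min_le_right _ _
  · exact le_refl _

lemma tildeExt_ge (u : EuclideanSpace ℝ (Fin m) → ℝ)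
    (hu : ∀ z ∈ ball (0 : EuclideanSpace ℝ (Fin m)) 1, ‖z‖ - 1 ≤ u z)
    (x : EuclideanSpace ℝ (Fin m)) : (-1 : ℝ) ≤ tildeExt u x := by
  unfold tildeExt
  split_ifs with h
  · have h1 := hu x h
    have hx : ‖x‖ < 1 := by simpa [mem_ball_zero_iff] using h
    have : (-1 : ℝ) ≤ u x := by linarith [norm_nonneg x]
    simp [le_min_iff, this]
  · norm_num

lemma tildeExt_zero (u : EuclideanSpace ℝ (Fin m) → ℝ) (hu0 : u 0 = -1) :
    tildeExt u 0 = -1 := by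
  have h0 : (0 : EuclideanSpace ℝ (Fin m)) ∈ ball (0 : EuclideanSpace ℝ (Fin m)) 1 := by
    simp [mem_ball_zero_iff]
  simp [tildeExt, h0, hu0]

lemma contactSet_subset (u : EuclideanSpace ℝ (Fin m) → ℝ)
    (hu : ∀ z ∈ ball (0 : EuclideanSpace ℝ (Fin m)) 1, ‖z‖ - 1 ≤ u z)
    (hu0 : u 0 = -1) : contactSet u ⊆ {0} := by
  intro x hx
  obtain ⟨hx2, hΓ⟩ := hx
  by_contra hx0
  have hx0' : x ≠ 0 := hx0
  have hxpos : 0 < ‖x‖ := norm_pos_iff.mpr hx0'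
  have hx2' : ‖x‖ < 2 := by simpa [mem_ball_zero_iff] using hx2
  set r : ℝ := (2 + ‖x‖) / 2 with hr
  have hr1 : 1 < r := by simp only [hr]; linarith
  have hr2 : r < 2 := by simp only [hr]; linarith
  have hrx : ‖x‖ < r := by simp only [hr]; linarith
  have hrpos : (0 : ℝ) < r := by linarith
  -- every affine minorant is small at x
  have hbd : ∀ t ∈ {t : ℝ | ∃ p : EuclideanSpace ℝ (Fin m), ∃ c : ℝ,
      (∀ ξ ∈ ball (0 : EuclideanSpace ℝ (Fin m)) 2, c + (inner ℝ p ξ : ℝ) ≤ tildeExt u ξ) ∧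
      t = c + (inner ℝ p x : ℝ)}, t ≤ ‖x‖ / r - 1 := by
    rintro t ⟨p, c, hl, ht⟩
    have hc : c ≤ -1 := by
      have h0 : (0 : EuclideanSpace ℝ (Fin m)) ∈ ball (0 : EuclideanSpace ℝ (Fin m)) 2 := by
        simp [mem_ball_zero_iff]
      have := hl 0 h0
      rw [tildeExt_zero u hu0] at this
      simpa using this
    have hcp : c + r * ‖p‖ ≤ 0 := by
      rcases eq_or_ne p 0 with hp | hp
      · simp [hp]; linarith
      · have hppos : 0 < ‖p‖ := norm_pos_iff.mpr hp
        set ξ : EuclideanSpace ℝ (Fin m) := (r / ‖p‖) • p with hξ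
        have hnξ : ‖ξ‖ = r := by
          rw [hξ, norm_smul, Real.norm_eq_abs, abs_of_pos (div_pos hrpos hppos)]
          field_simp
        have hξ2 : ξ ∈ ball (0 : EuclideanSpace ℝ (Fin m)) 2 := by
          simp [mem_ball_zero_iff, hnξ, hr2]
        have hξ1 : ξ ∉ ball (0 : EuclideanSpace ℝ (Fin m)) 1 := by
          simp [mem_ball_zero_iff, hnξ]; linarith
        have hw : tildeExt u ξ = 0 := by simp [tildeExt, hξ1]
        have hinner : (inner ℝ p ξ : ℝ) = r * ‖p‖ := by
          rw [hξ, real_inner_smul_right, real_inner_self_eq_norm_mul_norm]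
          field_simp
        have := hl ξ hξ2
        rw [hw, hinner] at this
        exact this
    have hCS : (inner ℝ p x : ℝ) ≤ ‖p‖ * ‖x‖ := real_inner_le_norm p x
    rw [ht, show ‖x‖ / r - 1 = (‖x‖ - r) / r by field_simp, le_div_iff₀ hrpos]
    nlinarith [mul_le_mul_of_nonneg_right hCS hrpos.le,
      mul_le_mul_of_nonneg_right hcp (norm_nonneg x),
      mul_le_mul_of_nonneg_right hc (sub_nonneg.mpr hrx.le)]
  -- the set is nonempty
  have hne : ((-1 : ℝ) + (inner ℝ (0 : EuclideanSpace ℝ (Fin m)) x : ℝ)) ∈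
      {t : ℝ | ∃ p : EuclideanSpace ℝ (Fin m), ∃ c : ℝ,
      (∀ ξ ∈ ball (0 : EuclideanSpace ℝ (Fin m)) 2, c + (inner ℝ p ξ : ℝ) ≤ tildeExt u ξ) ∧
      t = c + (inner ℝ p x : ℝ)} := by
    refine ⟨0, -1, fun ξ _ => ?_, rfl⟩
    simpa using tildeExt_ge u hu ξ
  have hΓle : convexEnvelope (tildeExt u) x ≤ ‖x‖ / r - 1 :=
    csSup_le ⟨_, hne⟩ hbd
  rw [hΓ] at hΓle
  -- contradiction
  have hdiv : ‖x‖ / r < ‖x‖ := by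
    rw [div_lt_iff₀ hrpos]
    nlinarith
  have hdiv2 : ‖x‖ / r < r := by
    calc ‖x‖ / r < ‖x‖ := hdiv
    _ < r := hrx
  rcases le_or_gt 1 ‖x‖ with h1 | h1
  · have : ‖x‖ / r - 1 < 0 := by
      have : ‖x‖ / r < 1 := (div_lt_one hrpos).mpr hrx
      linarith
    have h0 : tildeExt u x = 0 := by
      unfold tildeExt
      have : x ∉ ball (0 : EuclideanSpace ℝ (Fin m)) 1 := by
        simp [mem_ball_zero_iff]; linarith
      simp [this]
    linarith [hΓle, h0.symm ▸ hΓle]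
  · have hmem : x ∈ ball (0 : EuclideanSpace ℝ (Fin m)) 1 := mem_ball_zero_iff.mpr h1
    have h1u := hu x hmem
    have : tildeExt u x = min (u x) 0 := by simp [tildeExt, hmem]
    have hge : ‖x‖ - 1 ≤ tildeExt u x := by
      rw [this]; exact le_min h1u (by linarith)
    linarith

/-- for `u(z) = ‖z‖ - 1` on the unit ball of `ℂⁿ ≅ ℝ^{2n}`, the contact
set consists of the single point `0`; more generally, if `u ≥ ‖z‖ - 1` on the unit
ball and `u(0) = -1`, then the contact set of `u` is contained in `{0}`. -/
theorem contactSet_of_cone (n : ℕ) :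
    (∀ u : EuclideanSpace ℝ (Fin (2 * n)) → ℝ,
      (∀ z ∈ ball (0 : EuclideanSpace ℝ (Fin (2 * n))) 1, ‖z‖ - 1 ≤ u z) →
      u 0 = -1 → contactSet u ⊆ {0}) ∧
    contactSet (fun z : EuclideanSpace ℝ (Fin (2 * n)) => ‖z‖ - 1) = {0} := by
  constructor
  · exact fun u hu hu0 => contactSet_subset u hu hu0
  · apply Set.Subset.antisymm
    · exact contactSet_subset _ (fun z _ => le_refl _) (by simp)
    · intro x hx
      rw [Set.mem_singleton_iff] at hx
      subst hx
      set u : EuclideanSpace ℝ (Fin (2 * n)) → ℝ := fun z => ‖z‖ - 1 with hudef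
      have hu0 : u 0 = -1 := by simp [hudef]
      refine ⟨by simp [mem_ball_zero_iff], ?_⟩
      rw [tildeExt_zero u hu0]
      apply le_antisymm
      · apply csSup_le
        · exact ⟨-1, 0, -1, fun ξ _ => by simpa using tildeExt_ge u (fun z _ => le_refl _) ξ,
            by simp⟩
        · rintro t ⟨p, c, hl, ht⟩
          have h0 : (0 : EuclideanSpace ℝ (Fin (2 * n))) ∈
              ball (0 : EuclideanSpace ℝ (Fin (2 * n))) 2 := by simp [mem_ball_zero_iff]
          have := hl 0 h0
          rw [tildeExt_zero u hu0] at this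
          simp at this ht
          linarith [ht ▸ this]
      · apply le_csSup
        · exact ⟨-1, fun t ⟨p, c, hl, ht⟩ => by
            have h0 : (0 : EuclideanSpace ℝ (Fin (2 * n))) ∈
                ball (0 : EuclideanSpace ℝ (Fin (2 * n))) 2 := by simp [mem_ball_zero_iff]
            have := hl 0 h0
            rw [tildeExt_zero u hu0] at this
            simp at this ht; linarith [ht ▸ this]⟩
        · exact ⟨0, -1, fun ξ _ => by simpa using tildeExt_ge u (fun z _ => le_refl _) ξ,
            by simp⟩


end

end Stmt12
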